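/- Let G be a group acting freely on a nonempty type S (i.e., g • s = s implies g = 1) with finitely many orbits, and let L be a left ℤ[G]-module. Then the ℤ-module of G-equivariant functions {λ : S → L | λ(g • s) = g • λ(s) for all g ∈ G, s ∈ S} (with pointwise addition) is isomorphic to the coinvariants (L ⊗_ℤ ℤ[S])_G of the tensor product over ℤ of L with the free ℤ-module ℤ[S] on S, where G acts diagonally by g • (x ⊗ s) = (g • x) ⊗ (g • s). -/

import Mathlib

section

variable (G : Type*) [Group G] (S : Type*) [MulAction G S]
  (L : Type*) [AddCommGroup L] [Module (MonoidAlgebra ℤ G) L]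

/-- The action of a group element `g` on a `ℤ[G]`-module `L`, as a `ℤ`-linear map. -/
noncomputable def actHom (g : G) : L →ₗ[ℤ] L :=
  (DistribMulAction.toAddMonoidHom L (MonoidAlgebra.of ℤ G g)).toIntLinearMap

/-- The `ℤ`-module of `G`-equivariant functions `S → L`. -/
noncomputable def equivariantFunctions : Submodule ℤ (S → L) where
  carrier := {lam | ∀ (g : G) (s : S), lam (g • s) = MonoidAlgebra.of ℤ G g • lam s}
  add_mem' := by
    intro a b ha hb g s
    simp [ha g s, hb g s, smul_add]
  zero_mem' := by intro g s; simp
  smul_mem' := by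
    intro z lam hlam g s
    simp only [Pi.smul_apply, hlam g s]
    exact (smul_comm z (MonoidAlgebra.of ℤ G g) (lam s))

/-- The permutation action of `g ∈ G` on the free `ℤ`-module `ℤ[S]` on the `G`-set `S`. -/
noncomputable def permHom (g : G) : (S →₀ ℤ) →ₗ[ℤ] (S →₀ ℤ) :=
  Finsupp.lmapDomain ℤ ℤ (fun s => g • s)

/-- The diagonal action of `g ∈ G` on `L ⊗_ℤ ℤ[S]`, i.e. `g • (x ⊗ s) = (g • x) ⊗ (g • s)`. -/
noncomputable def diagActLS (g : G) :
    TensorProduct ℤ L (S →₀ ℤ) →ₗ[ℤ] TensorProduct ℤ L (S →₀ ℤ) :=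
  TensorProduct.map (actHom G L g) (permHom G S g)

/-- The `ℤ`-submodule of `L ⊗_ℤ ℤ[S]` spanned by `{g • x − x}` for the diagonal action;
the quotient by it is the coinvariants `(L ⊗_ℤ ℤ[S])_G`. -/
noncomputable def diagCoinvSubLS : Submodule ℤ (TensorProduct ℤ L (S →₀ ℤ)) :=
  Submodule.span ℤ
    {x | ∃ (g : G) (n : TensorProduct ℤ L (S →₀ ℤ)), x = diagActLS G S L g n - n}

/-! ### Auxiliary lemmas -/

lemma actHom_apply (g : G) (x : L) : actHom G L g x = MonoidAlgebra.of ℤ G g • x := rfl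

lemma actHom_mul (g h : G) (x : L) : actHom G L (g * h) x = actHom G L g (actHom G L h x) := by
  simp only [actHom_apply, map_mul, mul_smul]

lemma actHom_one (x : L) : actHom G L 1 x = x := by
  simp only [actHom_apply, map_one, one_smul]

/-- A choice of representative of an orbit. -/
noncomputable def qrep (q : MulAction.orbitRel.Quotient G S) : S := q.out

lemma qmk_qrep (q : MulAction.orbitRel.Quotient G S) :
    Quotient.mk'' (qrep G S q) = q := Quotient.out_eq' q

lemma qmk_smul (g : G) (s : S) :
    (Quotient.mk'' (g • s) : MulAction.orbitRel.Quotient G S) = Quotient.mk'' s :=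
  Quotient.sound' (by rw [MulAction.orbitRel_apply]; exact ⟨g, rfl⟩)

lemma exists_gOf (s : S) : ∃ g : G, g • qrep G S (Quotient.mk'' s) = s := by
  have := Quotient.exact' (Quotient.out_eq' (Quotient.mk'' s : MulAction.orbitRel.Quotient G S))
  rw [MulAction.orbitRel_apply] at this
  obtain ⟨g, hg⟩ := this
  exact ⟨g⁻¹, by simp only [qrep, ← hg]; simp⟩

/-- The unique group element carrying the chosen orbit representative of `s` to `s`. -/
noncomputable def gOf (s : S) : G := (exists_gOf G S s).choose

lemma gOf_spec (s : S) : gOf G S s • qrep G S (Quotient.mk'' s) = s :=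
  (exists_gOf G S s).choose_spec

variable {G S} in
lemma gOf_unique (hfree : ∀ (g : G) (s : S), g • s = s → g = 1) {s : S} {g : G}
    (h : g • qrep G S (Quotient.mk'' s) = s) : g = gOf G S s := by
  have h2 := gOf_spec G S s
  have key : ((gOf G S s)⁻¹ * g) • qrep G S (Quotient.mk'' s) = qrep G S (Quotient.mk'' s) := by
    rw [mul_smul, h, inv_smul_eq_iff, h2]
  have := hfree _ _ key
  rwa [inv_mul_eq_one, eq_comm] at this

variable {G S} in
lemma gOf_smul (hfree : ∀ (g : G) (s : S), g • s = s → g = 1) (g : G) (s : S) :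
    gOf G S (g • s) = g * gOf G S s := by
  refine (gOf_unique hfree ?_).symm
  rw [qmk_smul, mul_smul, gOf_spec]

variable {G S} in
lemma gOf_qrep (hfree : ∀ (g : G) (s : S), g • s = s → g = 1)
    (q : MulAction.orbitRel.Quotient G S) : gOf G S (qrep G S q) = 1 := by
  refine (gOf_unique hfree ?_).symm
  rw [qmk_qrep, one_smul]

open Classical in
/-- The coefficient linear map: zero if `s'`, `s` are in different orbits, otherwise the
action of the element carrying `s` to `s'` (through the representatives). -/
noncomputable def cMap (s' s : S) : L →ₗ[ℤ] L :=
  if Quotient.mk'' s' = (Quotient.mk'' s : MulAction.orbitRel.Quotient G S) then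
    actHom G L (gOf G S s' * (gOf G S s)⁻¹) else 0

variable {G S L} in
lemma cMap_smul_left (hfree : ∀ (g : G) (s : S), g • s = s → g = 1) (g : G) (s' s : S) (x : L) :
    cMap G S L (g • s') s x = actHom G L g (cMap G S L s' s x) := by
  unfold cMap
  rw [qmk_smul]
  split_ifs with h
  · rw [gOf_smul hfree, ← actHom_mul, mul_assoc]
  · simp

variable {G S L} in
lemma cMap_act_right (hfree : ∀ (g : G) (s : S), g • s = s → g = 1) (g : G) (s' s : S) (x : L) :
    cMap G S L s' (g • s) (actHom G L g x) = cMap G S L s' s x := by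
  unfold cMap
  rw [qmk_smul]
  split_ifs with h
  · rw [gOf_smul hfree, ← actHom_mul]
    have : gOf G S s' * (g * gOf G S s)⁻¹ * g = gOf G S s' * (gOf G S s)⁻¹ := by group
    rw [this]
  · rfl

/-- The pairing `L ⊗ ℤ[S] → L` at a point `s' : S`. -/
noncomputable def phiAt (s' : S) : TensorProduct ℤ L (S →₀ ℤ) →ₗ[ℤ] L :=
  TensorProduct.lift
    ((Finsupp.lsum ℤ (fun s => LinearMap.toSpanSingleton ℤ (L →ₗ[ℤ] L) (cMap G S L s' s))).flip)

lemma phiAt_tmul_single (s' s : S) (x : L) (n : ℤ) :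
    phiAt G S L s' (x ⊗ₜ[ℤ] Finsupp.single s n) = n • cMap G S L s' s x := by
  rw [phiAt]; erw [TensorProduct.lift.tmul]; simp

/-- The map `L ⊗ ℤ[S] → (S → L)`. -/
noncomputable def phiMap : TensorProduct ℤ L (S →₀ ℤ) →ₗ[ℤ] (S → L) :=
  LinearMap.pi (fun s' => phiAt G S L s')

variable {G S L} in
lemma phiAt_smul (hfree : ∀ (g : G) (s : S), g • s = s → g = 1) (g : G) (s' : S) :
    phiAt G S L (g • s') = (actHom G L g).comp (phiAt G S L s') := by
  ext x s
  show phiAt G S L (g • s') (x ⊗ₜ[ℤ] Finsupp.single s 1) =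
    actHom G L g (phiAt G S L s' (x ⊗ₜ[ℤ] Finsupp.single s 1))
  simp only [TensorProduct.AlgebraTensorModule.curry_apply, TensorProduct.curry_apply,
    LinearMap.coe_restrictScalars, Finsupp.lsingle_apply, LinearMap.coe_comp,
    Function.comp_apply, phiAt_tmul_single, one_smul]
  rw [cMap_smul_left hfree]

variable {G S L} in
lemma phiMap_mem (hfree : ∀ (g : G) (s : S), g • s = s → g = 1)
    (t : TensorProduct ℤ L (S →₀ ℤ)) : phiMap G S L t ∈ equivariantFunctions G S L := by
  intro g s'
  have := congrArg (fun f => f t) (phiAt_smul (L := L) hfree g s')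
  simpa [phiMap, actHom_apply] using this

variable {G S L} in
lemma phiMap_diagAct (hfree : ∀ (g : G) (s : S), g • s = s → g = 1) (g : G) :
    (phiMap G S L).comp (diagActLS G S L g) = phiMap G S L := by
  ext x s s'
  show phiMap G S L (actHom G L g x ⊗ₜ[ℤ]
      Finsupp.mapDomain (fun s => g • s) (Finsupp.single s 1)) s' =
    phiMap G S L (x ⊗ₜ[ℤ] Finsupp.single s 1) s'
  simp only [TensorProduct.AlgebraTensorModule.curry_apply, TensorProduct.curry_apply,
    LinearMap.coe_restrictScalars, Finsupp.lsingle_apply, LinearMap.coe_comp,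
    Function.comp_apply, diagActLS, TensorProduct.map_tmul, permHom,
    Finsupp.lmapDomain_apply, Finsupp.mapDomain_single, phiMap, LinearMap.pi_apply,
    phiAt_tmul_single, one_smul]
  exact cMap_act_right hfree g s' s x

/-- `phiMap` with codomain restricted to the equivariant functions. -/
noncomputable def phiMap' (hfree : ∀ (g : G) (s : S), g • s = s → g = 1) :
    TensorProduct ℤ L (S →₀ ℤ) →ₗ[ℤ] (equivariantFunctions G S L) :=
  LinearMap.codRestrict _ (phiMap G S L) (phiMap_mem hfree)

variable {G S L} in
lemma diagCoinv_le_ker (hfree : ∀ (g : G) (s : S), g • s = s → g = 1) :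
    diagCoinvSubLS G S L ≤ LinearMap.ker (phiMap' G S L hfree) := by
  rw [diagCoinvSubLS, Submodule.span_le]
  rintro _ ⟨g, n, rfl⟩
  rw [SetLike.mem_coe, LinearMap.mem_ker]
  apply Subtype.ext
  have := congrArg (fun f => f n) (phiMap_diagAct (L := L) hfree g)
  simpa [phiMap', map_sub, sub_eq_zero] using this

/-- The induced map from the coinvariants to the equivariant functions. -/
noncomputable def psiMap (hfree : ∀ (g : G) (s : S), g • s = s → g = 1) :
    (TensorProduct ℤ L (S →₀ ℤ) ⧸ diagCoinvSubLS G S L) →ₗ[ℤ] (equivariantFunctions G S L) :=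
  Submodule.liftQ _ (phiMap' G S L hfree) (diagCoinv_le_ker hfree)

variable {G S L} in
lemma mkQ_diagAct (g : G) (n : TensorProduct ℤ L (S →₀ ℤ)) :
    Submodule.mkQ (diagCoinvSubLS G S L) (diagActLS G S L g n) =
      Submodule.mkQ (diagCoinvSubLS G S L) n := by
  rw [Submodule.mkQ_apply, Submodule.mkQ_apply, Submodule.Quotient.eq]
  exact Submodule.subset_span ⟨g, n, rfl⟩

/-- If `G` acts freely with finitely many orbits on a nonempty type `S`, then for any
`ℤ[G]`-module `L` the `ℤ`-module of `G`-equivariant functions `S → L` is isomorphic to the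
coinvariants `(L ⊗_ℤ ℤ[S])_G` of the diagonal action. -/
theorem equivariantFunctions_iso_coinvariants
    [Nonempty S] (hfree : ∀ (g : G) (s : S), g • s = s → g = 1)
    (horbits : Finite (MulAction.orbitRel.Quotient G S)) :
    Nonempty ((equivariantFunctions G S L) ≃ₗ[ℤ]
      (TensorProduct ℤ L (S →₀ ℤ) ⧸ diagCoinvSubLS G S L)) := by
  cases nonempty_fintype (MulAction.orbitRel.Quotient G S)
  -- the map sending an equivariant function `lam` to `∑ q, lam (rep q) ⊗ [rep q]`
  set T : (equivariantFunctions G S L) →ₗ[ℤ] TensorProduct ℤ L (S →₀ ℤ) :=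
    ∑ q : MulAction.orbitRel.Quotient G S,
      ((TensorProduct.mk ℤ L (S →₀ ℤ)).flip ((Finsupp.single (qrep G S q) (1:ℤ)))).comp
        ((LinearMap.proj (qrep G S q)).comp (Submodule.subtype _)) with hT
  have hTapp : ∀ lam : (equivariantFunctions G S L),
      T lam = ∑ q : MulAction.orbitRel.Quotient G S,
        (lam : S → L) (qrep G S q) ⊗ₜ[ℤ] (Finsupp.single (qrep G S q) (1:ℤ)) := by
    intro lam
    rw [hT]; erw [LinearMap.sum_apply]; rfl
  set F : (equivariantFunctions G S L) →ₗ[ℤ]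
      (TensorProduct ℤ L (S →₀ ℤ) ⧸ diagCoinvSubLS G S L) :=
    (Submodule.mkQ (diagCoinvSubLS G S L)).comp T with hF
  refine ⟨LinearEquiv.ofLinear F (psiMap G S L hfree) ?_ ?_⟩
  · -- F ∘ psi = id
    refine Submodule.linearMap_qext _ ?_
    ext x s
    simp only [TensorProduct.AlgebraTensorModule.curry_apply, TensorProduct.curry_apply,
      LinearMap.coe_restrictScalars, Finsupp.lsingle_apply, LinearMap.coe_comp,
      Function.comp_apply, Submodule.mkQ_apply]
    show F (psiMap G S L hfree (Submodule.Quotient.mk (x ⊗ₜ[ℤ] Finsupp.single s 1))) =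
      Submodule.Quotient.mk (x ⊗ₜ[ℤ] Finsupp.single s 1)
    have h1 : psiMap G S L hfree (Submodule.Quotient.mk (x ⊗ₜ[ℤ] (Finsupp.single s (1:ℤ)))) =
        phiMap' G S L hfree (x ⊗ₜ[ℤ] (Finsupp.single s (1:ℤ))) := by
      simp [psiMap]
    rw [h1, hF]
    simp only [LinearMap.coe_comp, Function.comp_apply]
    rw [hTapp]
    have hcoe : ((phiMap' G S L hfree (x ⊗ₜ[ℤ] (Finsupp.single s (1:ℤ)))) : S → L) =
        phiMap G S L (x ⊗ₜ[ℤ] (Finsupp.single s (1:ℤ))) := rfl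
    rw [hcoe]
    have hval : ∀ s', phiMap G S L (x ⊗ₜ[ℤ] (Finsupp.single s (1:ℤ))) s' = cMap G S L s' s x := by
      intro s'
      simp [phiMap, phiAt_tmul_single]
    have hsum : ∑ q : MulAction.orbitRel.Quotient G S,
        phiMap G S L (x ⊗ₜ[ℤ] (Finsupp.single s (1:ℤ))) (qrep G S q) ⊗ₜ[ℤ]
          (Finsupp.single (qrep G S q) (1:ℤ))
        = (actHom G L (gOf G S s)⁻¹ x) ⊗ₜ[ℤ]
            (Finsupp.single (qrep G S (Quotient.mk'' s)) (1:ℤ)) := by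
      rw [Finset.sum_eq_single (Quotient.mk'' s)]
      · rw [hval, cMap, if_pos (qmk_qrep G S _), gOf_qrep hfree, one_mul]
      · intro q _ hq
        rw [hval, cMap, if_neg, LinearMap.zero_apply, TensorProduct.zero_tmul]
        rw [qmk_qrep]
        exact hq
      · intro h
        exact absurd (Finset.mem_univ _) h
    rw [hsum]
    rw [show (Submodule.Quotient.mk (x ⊗ₜ[ℤ] (Finsupp.single s (1:ℤ))) :
        TensorProduct ℤ L (S →₀ ℤ) ⧸ diagCoinvSubLS G S L)
        = Submodule.mkQ (diagCoinvSubLS G S L) (x ⊗ₜ[ℤ] (Finsupp.single s (1:ℤ))) from rfl]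
    rw [← mkQ_diagAct (gOf G S s)
      ((actHom G L (gOf G S s)⁻¹ x) ⊗ₜ[ℤ] (Finsupp.single (qrep G S (Quotient.mk'' s)) (1:ℤ)))]
    rw [Submodule.mkQ_apply, Submodule.mkQ_apply]
    congr 1
    rw [diagActLS]; erw [TensorProduct.map_tmul]; rw [← actHom_mul, mul_inv_cancel, actHom_one]
    congr 1
    rw [permHom, Finsupp.lmapDomain_apply, Finsupp.mapDomain_single, gOf_spec]
  · -- psi ∘ F = id
    refine LinearMap.ext fun lam => Subtype.ext (funext fun s' => ?_)
    have h1 : psiMap G S L hfree (F lam) = phiMap' G S L hfree (T lam) := by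
      simp [psiMap, hF]
    rw [LinearMap.comp_apply, h1]
    show phiMap G S L (T lam) s' = (lam : S → L) s'
    have hsum : ∑ q : MulAction.orbitRel.Quotient G S,
        phiMap G S L ((lam : S → L) (qrep G S q) ⊗ₜ[ℤ] (Finsupp.single (qrep G S q) (1:ℤ))) s'
        = actHom G L (gOf G S s') ((lam : S → L) (qrep G S (Quotient.mk'' s'))) := by
      rw [Finset.sum_eq_single (Quotient.mk'' s')]
      · simp only [phiMap, LinearMap.pi_apply, phiAt_tmul_single, one_smul]
        rw [cMap, if_pos (qmk_qrep G S _).symm, gOf_qrep hfree, inv_one, mul_one]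
      · intro q _ hq
        simp only [phiMap, LinearMap.pi_apply, phiAt_tmul_single, one_smul]
        rw [cMap, if_neg, LinearMap.zero_apply]
        rw [qmk_qrep]
        exact fun h => hq h.symm
      · intro h
        exact absurd (Finset.mem_univ _) h
    rw [hTapp, map_sum, Finset.sum_apply, hsum, actHom_apply,
      ← lam.2 (gOf G S s') (qrep G S (Quotient.mk'' s')), gOf_spec]

end
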